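/- Let F be a finite chordal polynomial set in K[x_1,...,x_n] such that x_1 < ... < x_n is a perfect elimination ordering of G(F). If a pair (P, Q) of finite polynomial sets is obtained from the pair (F, ∅) by finitely many subresultant-based steps and the nonzero elements of P are nonconstant with pairwise distinct leading variables, so that they form a triangular set T when ordered by leading variable, then G(T) ⊆ G(F). -/

import Mathlib

open MvPolynomial

variable {K : Type*} [Field K] {n : ℕ}

/-- The set of variables effectively appearing in a polynomial. -/
def psupp (F : MvPolynomial (Fin n) K) : Set (Fin n) := ↑F.vars

/-- The set of variables appearing in a set of polynomials. -/
def ssupp (P : Set (MvPolynomial (Fin n) K)) : Set (Fin n) :=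
  ⋃ F ∈ P, psupp F

/-- Adjacency in the associated graph `G(P)`: `p ≠ q` and some polynomial of `P`
contains both variables. -/
def adjG (P : Set (MvPolynomial (Fin n) K)) (p q : Fin n) : Prop :=
  p ≠ q ∧ ∃ F ∈ P, p ∈ psupp F ∧ q ∈ psupp F

/-- `G(P) ⊆ G(Q)`: every edge of `G(P)` is an edge of `G(Q)`. -/
def subG (P Q : Set (MvPolynomial (Fin n) K)) : Prop :=
  ∀ p q, adjG P p q → adjG Q p q

/-- The natural ordering `x_1 < ... < x_n` of the variables is a perfect elimination
ordering of `G(P)`; in particular `G(P)` is chordal. -/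
def isPEO (P : Set (MvPolynomial (Fin n) K)) : Prop :=
  ∀ p q k : Fin n, p < k → q < k → p ≠ q → adjG P p k → adjG P q k → adjG P p q

/-- `F` is nonconstant with leading variable `x_k`. -/
def hasLv (F : MvPolynomial (Fin n) K) (k : Fin n) : Prop :=
  k ∈ psupp F ∧ ∀ j ∈ psupp F, j ≤ k

/-- `P^(k)`: the polynomials of `P` with leading variable `x_k`. -/
def levelSet (P : Set (MvPolynomial (Fin n) K)) (k : Fin n) :
    Set (MvPolynomial (Fin n) K) :=
  {F | F ∈ P ∧ hasLv F k}

/-- A triangular set: a list of nonconstant polynomials with strictly increasing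
leading variables. -/
def IsTriangularSet (L : List (MvPolynomial (Fin n) K)) : Prop :=
  (∀ F ∈ L, (psupp F).Nonempty) ∧
    L.Chain' fun F G => ∃ a b, hasLv F a ∧ hasLv G b ∧ a < b

/-- A subresultant-based step: transform a pair `(P, Q)` of polynomial sets by
choosing `k` with `P^(k) ≠ ∅`, and either (right branch) choosing `T ∈ P^(k)` and
polynomials `I, R'` supported in `supp T` and passing to `((P \ {T}) ∪ {I, R'}, Q)`;
or (subresultant branch) choosing distinct `T₁, T₂ ∈ P^(k)`, polynomials
`H_2, ..., H_r` with `supp (H m) ⊆ supp T₁ ∪ supp T₂`, polynomials `I_2, ..., I_r`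
with `supp (I m) ⊆ supp (H m)`, a polynomial `J` with `supp J ⊆ supp T₂`, and
`2 ≤ i ≤ r`, and passing to
`((P \ {T₁, T₂}) ∪ {H i, I_{i+1}, ..., I_r}, Q ∪ {J, I i})`
(which for `i = r` is `((P \ {T₁, T₂}) ∪ {H r}, Q ∪ {J, I r})`). -/
def SubresStep (PQ PQ' :
    Set (MvPolynomial (Fin n) K) × Set (MvPolynomial (Fin n) K)) : Prop :=
  ∃ k : Fin n,
    (∃ T ∈ levelSet PQ.1 k, ∃ I R' : MvPolynomial (Fin n) K,
        psupp I ⊆ psupp T ∧ psupp R' ⊆ psupp T ∧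
        PQ'.1 = (PQ.1 \ {T}) ∪ {I, R'} ∧ PQ'.2 = PQ.2) ∨
    (∃ T₁ T₂ : MvPolynomial (Fin n) K, T₁ ≠ T₂ ∧
        T₁ ∈ levelSet PQ.1 k ∧ T₂ ∈ levelSet PQ.1 k ∧
      ∃ (r : ℕ) (H I : ℕ → MvPolynomial (Fin n) K) (J : MvPolynomial (Fin n) K)
          (i : ℕ), 2 ≤ i ∧ i ≤ r ∧
        (∀ m, 2 ≤ m → m ≤ r → psupp (H m) ⊆ psupp T₁ ∪ psupp T₂) ∧
        (∀ m, 2 ≤ m → m ≤ r → psupp (I m) ⊆ psupp (H m)) ∧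
        psupp J ⊆ psupp T₂ ∧
        PQ'.1 = (PQ.1 \ {T₁, T₂}) ∪ {H i} ∪ (I '' {m | i < m ∧ m ≤ r}) ∧
        PQ'.2 = PQ.2 ∪ {J, I i})


private lemma adjG_symm {K : Type*} [Field K] {n : ℕ} {Fs : Set (MvPolynomial (Fin n) K)}
    {p q : Fin n} (h : adjG Fs p q) : adjG Fs q p :=
  ⟨h.1.symm, h.2.imp fun F hF => ⟨hF.1, hF.2.2, hF.2.1⟩⟩

private lemma clique_union_lv {K : Type*} [Field K] {n : ℕ}
    {Fs : Set (MvPolynomial (Fin n) K)} (hpeo : isPEO Fs)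
    {T₁ T₂ : MvPolynomial (Fin n) K} {k : Fin n}
    (h1 : hasLv T₁ k) (h2 : hasLv T₂ k)
    (c1 : ∀ p ∈ psupp T₁, ∀ q ∈ psupp T₁, p ≠ q → adjG Fs p q)
    (c2 : ∀ p ∈ psupp T₂, ∀ q ∈ psupp T₂, p ≠ q → adjG Fs p q) :
    ∀ p ∈ psupp T₁ ∪ psupp T₂, ∀ q ∈ psupp T₁ ∪ psupp T₂, p ≠ q → adjG Fs p q := by
  have cross : ∀ p ∈ psupp T₁, ∀ q ∈ psupp T₂, p ≠ q → adjG Fs p q := by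
    intro p hp q hq hne
    rcases eq_or_lt_of_le (h1.2 p hp) with hpk | hpk
    · exact c2 p (hpk ▸ h2.1) q hq hne
    rcases eq_or_lt_of_le (h2.2 q hq) with hqk | hqk
    · exact c1 p hp q (hqk ▸ h1.1) hne
    exact hpeo p q k hpk hqk hne (c1 p hp k h1.1 (ne_of_lt hpk))
      (c2 q hq k h2.1 (ne_of_lt hqk))
  rintro p (hp | hp) q (hq | hq) hne
  · exact c1 p hp q hq hne
  · exact cross p hp q hq hne
  · exact adjG_symm (cross q hq p hp hne.symm)
  · exact c2 p hp q hq hne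

private lemma invariantAux {K : Type*} [Field K] {n : ℕ}
    {Fs : Set (MvPolynomial (Fin n) K)} (hFfin : Fs.Finite) (hpeo : isPEO Fs)
    (PQ : Set (MvPolynomial (Fin n) K) × Set (MvPolynomial (Fin n) K))
    (h : Relation.ReflTransGen SubresStep (Fs, ∅) PQ) :
    PQ.1.Finite ∧ ∀ F ∈ PQ.1, ∀ p ∈ psupp F, ∀ q ∈ psupp F, p ≠ q → adjG Fs p q := by
  induction h with
  | refl => exact ⟨hFfin, fun F hF p hp q hq hne => ⟨hne, F, hF, hp, hq⟩⟩
  | tail _ step ih =>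
    obtain ⟨hfin, hcl⟩ := ih
    obtain ⟨k, ⟨T, hT, I, R', hI, hR', hP1, _⟩ |
      ⟨T₁, T₂, hne12, hT1, hT2, r, H, I, J, i, hi2, hir, hH, hIH, _, hP1, _⟩⟩ := step
    · constructor
      · rw [hP1]
        exact (hfin.sdiff.union ((Set.finite_singleton R').insert I))
      · intro F hF
        rw [hP1] at hF
        rcases hF with hF | hF
        · exact hcl F hF.1
        · have hTcl := hcl T hT.1
          rcases hF with rfl | rfl
          · exact fun p hp q hq hne => hTcl p (hI hp) q (hI hq) hne
          · exact fun p hp q hq hne => hTcl p (hR' hp) q (hR' hq) hne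
    · have hHcl : ∀ m, 2 ≤ m → m ≤ r →
          ∀ p ∈ psupp (H m), ∀ q ∈ psupp (H m), p ≠ q → adjG Fs p q := by
        intro m hm2 hmr p hp q hq hne
        exact clique_union_lv hpeo hT1.2 hT2.2 (hcl T₁ hT1.1) (hcl T₂ hT2.1)
          p (hH m hm2 hmr hp) q (hH m hm2 hmr hq) hne
      constructor
      · rw [hP1]
        refine ((hfin.sdiff.union (Set.finite_singleton _)).union ?_)
        exact ((Set.finite_Ioc i r).image I)
      · intro F hF
        rw [hP1] at hF
        rcases hF with (hF | rfl) | ⟨m, ⟨him, hmr⟩, rfl⟩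
        · exact hcl F hF.1
        · exact hHcl i hi2 hir
        · have hm2 : 2 ≤ m := le_trans hi2 (le_of_lt him)
          exact fun p hp q hq hne =>
            hHcl m hm2 hmr p (hIH m hm2 hmr hp) q (hIH m hm2 hmr hq) hne

/-- let `Fs` be a finite chordal polynomial set whose natural variable
ordering is a perfect elimination ordering, and let `(P, Q)` be obtained from
`(Fs, ∅)` by finitely many subresultant-based steps.  If the nonzero elements of
`P` are nonconstant with pairwise distinct leading variables, then they form,
ordered by leading variable, a triangular set `L` with `G(L) ⊆ G(Fs)`. -/
theorem statement12 {K : Type*} [Field K] {n : ℕ}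
    (Fs : Set (MvPolynomial (Fin n) K)) (hFfin : Fs.Finite) (hpeo : isPEO Fs)
    (P Q : Set (MvPolynomial (Fin n) K))
    (h : Relation.ReflTransGen SubresStep (Fs, ∅) (P, Q))
    (hnc : ∀ G ∈ P, G ≠ 0 → (psupp G).Nonempty)
    (hdist : ∀ G ∈ P, ∀ H ∈ P, G ≠ 0 → H ≠ 0 → G ≠ H →
      ∀ a b : Fin n, hasLv G a → hasLv H b → a ≠ b) :
    ∃ L : List (MvPolynomial (Fin n) K),
      (∀ G, G ∈ L ↔ G ∈ P ∧ G ≠ 0) ∧ IsTriangularSet L ∧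
      subG {G | G ∈ L} Fs := by
  obtain ⟨hPfin, hclique⟩ := invariantAux hFfin hpeo (P, Q) h
  have hP'fin : {G : MvPolynomial (Fin n) K | G ∈ P ∧ G ≠ 0}.Finite :=
    hPfin.subset fun G hG => hG.1
  classical
  set lvD : MvPolynomial (Fin n) K → ℕ :=
    fun G => if h : G.vars.Nonempty then ((G.vars.max' h : Fin n) : ℕ) else 0 with hlvD
  set L : List (MvPolynomial (Fin n) K) :=
    hP'fin.toFinset.toList.mergeSort (fun G H => decide (lvD G ≤ lvD H)) with hL
  have hmem : ∀ G, G ∈ L ↔ G ∈ P ∧ G ≠ 0 := by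
    intro G
    rw [hL, List.mem_mergeSort, Finset.mem_toList, Set.Finite.mem_toFinset]
    exact Iff.rfl
  have hvars : ∀ G ∈ L, G.vars.Nonempty := by
    intro G hG
    have := hnc G ((hmem G).1 hG).1 ((hmem G).1 hG).2
    exact Finset.coe_nonempty.1 this
  have hnod : L.Nodup :=
    (List.mergeSort_perm _ _).nodup_iff.2 (Finset.nodup_toList _)
  have hsorted : L.Pairwise fun G H' => lvD G ≤ lvD H' := by
    have := List.pairwise_mergeSort (le := fun G H' => decide (lvD G ≤ lvD H'))
      (fun a b c hab hbc => by
        simp only [decide_eq_true_eq] at *; exact le_trans hab hbc)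
      (fun a b => by
        simp only [Bool.or_eq_true, decide_eq_true_eq]; exact le_total _ _)
      hP'fin.toFinset.toList
    refine this.imp_of_mem fun {a b} _ _ hr => ?_
    simpa using hr
  refine ⟨L, hmem, ⟨?_, ?_⟩, ?_⟩
  · intro F hF
    exact hnc F ((hmem F).1 hF).1 ((hmem F).1 hF).2
  · refine ((hsorted.and hnod).imp_of_mem ?_).isChain
    intro G H' hGL hHL ⟨hle, hneq⟩
    have hGv := hvars G hGL
    have hHv := hvars H' hHL
    refine ⟨G.vars.max' hGv, H'.vars.max' hHv, ⟨G.vars.max'_mem hGv, fun j hj => G.vars.le_max' j hj⟩,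
      ⟨H'.vars.max'_mem hHv, fun j hj => H'.vars.le_max' j hj⟩, ?_⟩
    have hab : G.vars.max' hGv ≠ H'.vars.max' hHv :=
      hdist G ((hmem G).1 hGL).1 H' ((hmem H').1 hHL).1 ((hmem G).1 hGL).2
        ((hmem H').1 hHL).2 hneq _ _
        ⟨G.vars.max'_mem hGv, fun j hj => G.vars.le_max' j hj⟩
        ⟨H'.vars.max'_mem hHv, fun j hj => H'.vars.le_max' j hj⟩
    have hle' : ((G.vars.max' hGv : Fin n) : ℕ) ≤ ((H'.vars.max' hHv : Fin n) : ℕ) := by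
      rw [hlvD] at hle
      simpa [dif_pos hGv, dif_pos hHv] using hle
    exact lt_of_le_of_ne (by exact_mod_cast hle') hab
  · rintro p q ⟨hne, F, hF, hp, hq⟩
    exact hclique F ((hmem F).1 hF).1 p hp q hq hne
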